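/- For every n : ℕ and every Pauli string a : Fin n → Fin 4: if #Y(a) is even, then every entry of the n-qubit Pauli tensor g_a is real (has zero imaginary part); if #Y(a) is odd, then every entry of g_a is purely imaginary (has zero real part). -/

import Mathlib

open Matrix

/-- The four Pauli matrices σ_I, σ_X, σ_Y, σ_Z. -/
noncomputable def pauli : Fin 4 → Matrix (Fin 2) (Fin 2) ℂ
  | 0 => 1
  | 1 => !![0, 1; 1, 0]
  | 2 => !![0, -Complex.I; Complex.I, 0]
  | 3 => !![1, 0; 0, -1]

/-- The `n`-qubit Pauli tensor `g_a = σ_{a 0} ⊗ ⋯ ⊗ σ_{a (n-1)}`, realized as a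
matrix indexed by `Fin n → Fin 2` (a type of cardinality `2 ^ n`), whose entries
are given by the usual Kronecker-product formula. -/
noncomputable def pauliTensor {n : ℕ} (a : Fin n → Fin 4) :
    Matrix (Fin n → Fin 2) (Fin n → Fin 2) ℂ :=
  Matrix.of fun i j => ∏ k, pauli (a k) (i k) (j k)

/-- The number of `Y` labels in the Pauli string `a`. -/
def numY {n : ℕ} (a : Fin n → Fin 4) : ℕ :=
  (Finset.univ.filter fun k => a k = 2).card

lemma prod_re_im_key {α : Type*} [DecidableEq α] (p : α → Prop) [DecidablePred p]
    (f : α → ℂ) (s : Finset α)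
    (h1 : ∀ k ∈ s, ¬ p k → (f k).im = 0) (h2 : ∀ k ∈ s, p k → (f k).re = 0) :
    (Even (s.filter p).card → (∏ k ∈ s, f k).im = 0) ∧
    (Odd (s.filter p).card → (∏ k ∈ s, f k).re = 0) := by
  revert h1 h2
  induction s using Finset.induction with
  | empty => simp
  | @insert a s ha ih =>
    intro h1 h2
    have h1' := fun k hk => h1 k (Finset.mem_insert_of_mem hk)
    have h2' := fun k hk => h2 k (Finset.mem_insert_of_mem hk)
    obtain ⟨ihE, ihO⟩ := ih h1' h2'
    rw [Finset.prod_insert ha, Finset.filter_insert]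
    by_cases hp : p a
    · have hre : (f a).re = 0 := h2 a (Finset.mem_insert_self a s) hp
      rw [if_pos hp, Finset.card_insert_of_notMem (fun h => ha (Finset.mem_of_mem_filter a h))]
      constructor
      · intro hev
        have : Odd (s.filter p).card := by
          rcases Nat.even_or_odd (s.filter p).card with h | h
          · exact absurd hev (by simp [Nat.even_add_one, h])
          · exact h
        simp [Complex.mul_im, hre, ihO this]
      · intro hod
        have : Even (s.filter p).card := by
          rcases Nat.even_or_odd (s.filter p).card with h | h
          · exact h
          · exact absurd hod (by simp [Nat.odd_add_one, h, Nat.not_even_iff_odd])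
        simp [Complex.mul_re, hre, ihE this]
    · have him : (f a).im = 0 := h1 a (Finset.mem_insert_self a s) hp
      rw [if_neg hp]
      constructor
      · intro hev
        simp [Complex.mul_im, him, ihE hev]
      · intro hod
        simp [Complex.mul_re, him, ihO hod]

/-- If `#Y(a)` is even then every entry of `g_a` is real; if `#Y(a)` is odd then
every entry of `g_a` is purely imaginary. -/
theorem pauliTensor_entries_real_or_imaginary (n : ℕ) (a : Fin n → Fin 4) :
    (Even (numY a) → ∀ i j, (pauliTensor a i j).im = 0) ∧
    (Odd (numY a) → ∀ i j, (pauliTensor a i j).re = 0) := by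
  have key : ∀ i j : Fin n → Fin 2,
      (Even (numY a) → (pauliTensor a i j).im = 0) ∧
      (Odd (numY a) → (pauliTensor a i j).re = 0) := by
    intro i j
    have := prod_re_im_key (fun k => a k = 2)
      (fun k => pauli (a k) (i k) (j k)) Finset.univ
      (fun k _ hk => by
        show (pauli (a k) (i k) (j k)).im = 0
        generalize hm : a k = m at hk ⊢
        generalize i k = x
        generalize j k = y
        fin_cases m <;> fin_cases x <;> fin_cases y <;>
          simp_all [pauli, Matrix.one_apply])
      (fun k _ hk => by
        show (pauli (a k) (i k) (j k)).re = 0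
        have hk : a k = 2 := hk
        generalize i k = x
        generalize j k = y
        rw [hk]
        fin_cases x <;> fin_cases y <;> simp [pauli])
    exact this
  exact ⟨fun h i j => (key i j).1 h, fun h i j => (key i j).2 h⟩
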